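/- arXiv:math/0401186 — 2 statements merged into one kernel-verified Lean document; each statement's English description precedes it below -/
import Mathlib

section
/- Define a : ℝ⁴ → ℝ⁴ by a(T,x,y,λ) = (0, T·y, −T·x, (x² + y²)/2 − T²). Then for all indices i, j ∈ {0,1,2,3} and every point p = (T,x,y,λ) ∈ ℝ⁴, the (i,j) entry of Q(T,x,y) equals ∂_j a_i(p) − ∂_i a_j(p), where ∂_k denotes the partial derivative in the k-th coordinate of (T,x,y,λ). (Thus the 2-form ω is exact, ω = dα for the 1-form α with coefficient functions a, and in particular ω is closed.) -/
open Matrix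

def Qmat (T x y : ℝ) : Matrix (Fin 4) (Fin 4) ℝ :=
  !![0, -y, x, 2*T;
     y, 0, 2*T, -x;
     -x, -2*T, 0, -y;
     -2*T, x, y, 0]

noncomputable def aCoeff (p : Fin 4 → ℝ) : Fin 4 → ℝ :=
  ![0, p 0 * p 2, -(p 0 * p 1), (p 1 ^ 2 + p 2 ^ 2) / 2 - p 0 ^ 2]

lemma hd (k : Fin 4) (p : Fin 4 → ℝ) :
    HasFDerivAt (fun q : Fin 4 → ℝ => q k)
      (ContinuousLinearMap.proj k : (Fin 4 → ℝ) →L[ℝ] ℝ) p := by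
  exact (ContinuousLinearMap.proj k : (Fin 4 → ℝ) →L[ℝ] ℝ).hasFDerivAt (x := p)

lemma fd0 (p : Fin 4 → ℝ) (j : Fin 4) :
    fderiv ℝ (fun q => aCoeff q 0) p (Pi.single j 1) = 0 := by
  have : (fun q : Fin 4 → ℝ => aCoeff q 0) = fun _ => (0:ℝ) := by
    ext q; simp [aCoeff]
  rw [this, fderiv_fun_const]
  simp

lemma fd1 (p : Fin 4 → ℝ) (j : Fin 4) :
    fderiv ℝ (fun q => aCoeff q 1) p (Pi.single j 1)
      = p 0 * (Pi.single j 1 : Fin 4 → ℝ) 2 + p 2 * (Pi.single j 1 : Fin 4 → ℝ) 0 := by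
  have h := ((hd 0 p).fun_mul (hd 2 p)).fderiv
  have : (fun q : Fin 4 → ℝ => aCoeff q 1) = fun q : Fin 4 → ℝ => q 0 * q 2 := by
    ext q; simp [aCoeff]
  rw [this, h]
  simp

lemma fd2 (p : Fin 4 → ℝ) (j : Fin 4) :
    fderiv ℝ (fun q => aCoeff q 2) p (Pi.single j 1)
      = -(p 0 * (Pi.single j 1 : Fin 4 → ℝ) 1 + p 1 * (Pi.single j 1 : Fin 4 → ℝ) 0) := by
  have h := (((hd 0 p).fun_mul (hd 1 p)).fun_neg).fderiv
  have : (fun q : Fin 4 → ℝ => aCoeff q 2) = fun q : Fin 4 → ℝ => -(q 0 * q 1) := by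
    ext q; simp [aCoeff]
  rw [this, h]
  simp

lemma fd3 (p : Fin 4 → ℝ) (j : Fin 4) :
    fderiv ℝ (fun q => aCoeff q 3) p (Pi.single j 1)
      = (2 * p 1 * (Pi.single j 1 : Fin 4 → ℝ) 1 + 2 * p 2 * (Pi.single j 1 : Fin 4 → ℝ) 2) / 2
        - 2 * p 0 * (Pi.single j 1 : Fin 4 → ℝ) 0 := by
  have h := (((((hd 1 p).fun_mul (hd 1 p)).fun_add ((hd 2 p).fun_mul (hd 2 p))).const_mul (1/2 : ℝ)).fun_sub ((hd 0 p).fun_mul (hd 0 p))).fderiv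
  have : (fun q : Fin 4 → ℝ => aCoeff q 3)
      = fun q : Fin 4 → ℝ => (1/2 : ℝ) * (q 1 * q 1 + q 2 * q 2) - q 0 * q 0 := by
    ext q; simp [aCoeff]; ring
  rw [this, h]
  simp
  ring

theorem omega_is_exact (i j : Fin 4) (p : Fin 4 → ℝ) :
    Qmat (p 0) (p 1) (p 2) i j
      = fderiv ℝ (fun q => aCoeff q i) p (Pi.single j 1)
        - fderiv ℝ (fun q => aCoeff q j) p (Pi.single i 1) := by
  fin_cases i <;> fin_cases j <;>
    simp [Qmat, fd0, fd1, fd2, fd3, Pi.single_apply] <;> ring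
end

section
/- For every (T,x,y) ≠ (0,0,0), the matrix J := R(T,x,y)⁻¹ · Q(T,x,y) satisfies: J·J = −1; Jᵀ·Q(T,x,y)·J = Q(T,x,y); and (Jv) · (Q(T,x,y)v) = R(T,x,y)·‖v‖² for every v ∈ ℝ⁴, which is strictly positive for v ≠ 0. Hence J defines an almost complex structure on ℝ⁴ ∖ Z compatible with the 2-form ω, with associated Riemannian metric R times the flat metric. -/
open Matrix

/-- R(T,x,y) = √(4T² + x² + y²). -/
noncomputable def Rfun (T x y : ℝ) : ℝ := Real.sqrt (4*T^2 + x^2 + y^2)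

theorem compatible_acs_off_zero_locus (T x y : ℝ) (h : (T, x, y) ≠ ((0:ℝ), (0:ℝ), (0:ℝ))) :
    ((Rfun T x y)⁻¹ • Qmat T x y) * ((Rfun T x y)⁻¹ • Qmat T x y)
        = -(1 : Matrix (Fin 4) (Fin 4) ℝ) ∧
    ((Rfun T x y)⁻¹ • Qmat T x y)ᵀ * Qmat T x y * ((Rfun T x y)⁻¹ • Qmat T x y)
        = Qmat T x y ∧
    (∀ v : Fin 4 → ℝ,
      (((Rfun T x y)⁻¹ • Qmat T x y).mulVec v) ⬝ᵥ ((Qmat T x y).mulVec v)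
        = Rfun T x y * (v ⬝ᵥ v)) ∧
    (∀ v : Fin 4 → ℝ, v ≠ 0 →
      0 < (((Rfun T x y)⁻¹ • Qmat T x y).mulVec v) ⬝ᵥ ((Qmat T x y).mulVec v)) := by
  have hsum : 0 < 4*T^2 + x^2 + y^2 := by
    rcases lt_or_eq_of_le (by positivity : (0:ℝ) ≤ 4*T^2 + x^2 + y^2) with hp | he
    · exact hp
    · exfalso; apply h
      have hT : T = 0 := by nlinarith [sq_nonneg T, sq_nonneg x, sq_nonneg y]
      have hx : x = 0 := by nlinarith [sq_nonneg T, sq_nonneg x, sq_nonneg y]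
      have hy : y = 0 := by nlinarith [sq_nonneg T, sq_nonneg x, sq_nonneg y]
      simp [hT, hx, hy]
  have hRpos : 0 < Rfun T x y := Real.sqrt_pos.2 hsum
  have hRne : Rfun T x y ≠ 0 := ne_of_gt hRpos
  have hR2 : Rfun T x y ^ 2 = 4*T^2 + x^2 + y^2 := Real.sq_sqrt hsum.le
  have hQsq : Qmat T x y * Qmat T x y = (-(4*T^2 + x^2 + y^2)) • (1 : Matrix (Fin 4) (Fin 4) ℝ) := by
    ext i j
    fin_cases i <;> fin_cases j <;>
      simp [Qmat, Matrix.mul_apply, Fin.sum_univ_four, Matrix.one_apply] <;> ring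
  have hQt : (Qmat T x y)ᵀ = -(Qmat T x y) := by
    ext i j
    fin_cases i <;> fin_cases j <;> simp [Qmat]
  have hkey : ∀ v : Fin 4 → ℝ,
      ((Qmat T x y).mulVec v) ⬝ᵥ ((Qmat T x y).mulVec v) = (4*T^2 + x^2 + y^2) * (v ⬝ᵥ v) := by
    intro v
    simp [Qmat, Matrix.mulVec, dotProduct, Fin.sum_univ_four]
    ring
  have h3 : ∀ v : Fin 4 → ℝ,
      (((Rfun T x y)⁻¹ • Qmat T x y).mulVec v) ⬝ᵥ ((Qmat T x y).mulVec v)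
        = Rfun T x y * (v ⬝ᵥ v) := by
    intro v
    rw [Matrix.smul_mulVec, smul_dotProduct, hkey, ← hR2]
    field_simp
    rw [smul_eq_mul, one_div, inv_mul_eq_iff_eq_mul₀ hRne]
    ring
  refine ⟨?_, ?_, h3, ?_⟩
  · rw [Matrix.smul_mul, Matrix.mul_smul, hQsq, smul_smul, smul_smul]
    rw [show (Rfun T x y)⁻¹ * (Rfun T x y)⁻¹ * -(4*T^2 + x^2 + y^2) = -1 by
      rw [← hR2]; field_simp]
    simp
  · rw [Matrix.transpose_smul, hQt, Matrix.smul_mul, Matrix.mul_smul, Matrix.smul_mul]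
    have hstep : -Qmat T x y * Qmat T x y * Qmat T x y
        = (4*T^2 + x^2 + y^2) • Qmat T x y := by
      rw [Matrix.neg_mul, Matrix.neg_mul, hQsq, Matrix.smul_mul, Matrix.one_mul]
      module
    rw [hstep, smul_smul, smul_smul]
    rw [show (Rfun T x y)⁻¹ * (Rfun T x y)⁻¹ * (4*T^2 + x^2 + y^2) = 1 by
      rw [← hR2]; field_simp]
    simp
  · intro v hv
    rw [h3 v]
    have hvv : 0 < v ⬝ᵥ v := by
      rcases lt_or_eq_of_le (Finset.sum_nonneg fun i _ => mul_self_nonneg (v i)) with hp | he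
      · exact hp
      · exact absurd ((dotProduct_self_eq_zero).1 he.symm) hv
    exact mul_pos hRpos hvv
end
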